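/- Let A be an invertible positive-definite Hermitian matrix and B Hermitian with ‖A^{-1/2} B A^{-1/2}‖ ≤ 1/2. Then A + B is positive definite and (1/2) A ⪯ A + B ⪯ (3/2) A in the Loewner order. -/

import Mathlib

open Matrix
open scoped ComplexOrder

/-- The square root of a positive semidefinite matrix, as defined in the older Mathlib. -/
noncomputable def Matrix.PosSemidef.sqrt {𝕜 : Type*} [RCLike 𝕜] {n : Type*} [Fintype n]
    [DecidableEq n] {A : Matrix n n 𝕜} (hA : Matrix.PosSemidef A) : Matrix n n 𝕜 :=
  (hA.1.eigenvectorUnitary : Matrix n n 𝕜) *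
    diagonal (fun i => ((Real.sqrt (hA.1.eigenvalues i) : ℝ) : 𝕜)) *
    (star hA.1.eigenvectorUnitary : Matrix n n 𝕜)

theorem stmt9_sqrt_eq_cfc {n : ℕ} {A : Matrix (Fin n) (Fin n) ℂ} (hA : A.PosSemidef) :
    hA.sqrt = cfc Real.sqrt A := by
  rw [hA.1.cfc_eq]; rfl

theorem stmt9_spec_pos {n : ℕ} {A : Matrix (Fin n) (Fin n) ℂ} (hA : A.PosDef) :
    ∀ x ∈ spectrum ℝ A, 0 < x := by
  intro x hx
  rw [hA.1.spectrum_real_eq_range_eigenvalues] at hx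
  obtain ⟨i, rfl⟩ := hx
  exact hA.eigenvalues_pos i

theorem stmt9_sqrt_mul_self {n : ℕ} {A : Matrix (Fin n) (Fin n) ℂ} (hA : A.PosDef) :
    hA.posSemidef.sqrt * hA.posSemidef.sqrt = A := by
  have hsa : IsSelfAdjoint A := hA.1
  have hfin := (Matrix.finite_real_spectrum (A := A))
  rw [stmt9_sqrt_eq_cfc, ← cfc_mul Real.sqrt Real.sqrt A (hfin.continuousOn _) (hfin.continuousOn _)]
  conv_rhs => rw [← cfc_id' ℝ A]
  refine cfc_congr fun x hx => ?_
  exact Real.mul_self_sqrt (stmt9_spec_pos hA x hx).le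

theorem stmt9_sqrt_herm {n : ℕ} {A : Matrix (Fin n) (Fin n) ℂ} (hA : A.PosDef) :
    (hA.posSemidef.sqrt)ᴴ = hA.posSemidef.sqrt := by
  rw [stmt9_sqrt_eq_cfc]
  exact (cfc_predicate Real.sqrt A : IsSelfAdjoint _)

theorem stmt9_inv_sqrt {n : ℕ} {A : Matrix (Fin n) (Fin n) ℂ} (hA : A.PosDef) :
    hA.inv.posSemidef.sqrt = (hA.posSemidef.sqrt)⁻¹ := by
  have hsa : IsSelfAdjoint A := hA.1
  have hfin := (Matrix.finite_real_spectrum (A := A))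
  have hpos := stmt9_spec_pos hA
  have hinv : A⁻¹ = cfc (fun x : ℝ => x⁻¹) A := by
    refine Matrix.inv_eq_left_inv ?_
    have hm := cfc_mul (fun x : ℝ => x⁻¹) (fun x : ℝ => x) A (hfin.continuousOn _)
      (hfin.continuousOn _)
    rw [cfc_id' ℝ A] at hm
    rw [← hm]
    rw [← cfc_const_one ℝ A]
    exact cfc_congr fun x hx => inv_mul_cancel₀ (hpos x hx).ne'
  have hRinv : (hA.posSemidef.sqrt)⁻¹ = cfc (fun x : ℝ => (Real.sqrt x)⁻¹) A := by
    refine Matrix.inv_eq_left_inv ?_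
    rw [stmt9_sqrt_eq_cfc, ← cfc_mul _ _ A (hfin.continuousOn _) (hfin.continuousOn _)]
    rw [← cfc_const_one ℝ A]
    exact cfc_congr fun x hx => inv_mul_cancel₀ (Real.sqrt_pos.2 (hpos x hx)).ne'
  rw [stmt9_sqrt_eq_cfc, hRinv]
  simp only [hinv]
  rw [← cfc_comp Real.sqrt (fun x : ℝ => x⁻¹) A hsa ((hfin.image _).continuousOn _)
    (hfin.continuousOn _)]
  refine cfc_congr fun x _ => ?_
  simp [Real.sqrt_inv]

/-- Stability-neighbourhood perturbation: if `A` is positive definite Hermitian and `B` is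
Hermitian with `‖A^{-1/2} B A^{-1/2}‖ ≤ 1/2` (operator norm on Euclidean space), then
`A + B` is positive definite and `(1/2) A ⪯ A + B ⪯ (3/2) A` in the Loewner order. -/
theorem stmt9 (n : ℕ) (A B : Matrix (Fin n) (Fin n) ℂ)
    (hA : A.PosDef) (hB : B.IsHermitian)
    (hsmall :
      ‖Matrix.toEuclideanCLM (𝕜 := ℂ)
          (hA.inv.posSemidef.sqrt * B * hA.inv.posSemidef.sqrt)‖ ≤ 1 / 2) :
    (A + B).PosDef ∧
    ((A + B) - (1 / 2 : ℂ) • A).PosSemidef ∧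
    ((3 / 2 : ℂ) • A - (A + B)).PosSemidef := by
  set S := hA.inv.posSemidef.sqrt with hSdef
  set R := hA.posSemidef.sqrt with hRdef
  set T := S * B * S with hTdef
  have hRR : R * R = A := stmt9_sqrt_mul_self hA
  have hRH : Rᴴ = R := stmt9_sqrt_herm hA
  have hRdet : IsUnit R.det := by
    have h := (Matrix.isUnit_iff_isUnit_det A).1 hA.isUnit
    have : R.det * R.det = A.det := by rw [← det_mul, hRR]
    exact isUnit_of_mul_isUnit_left (this ▸ h)
  have hSR : S = R⁻¹ := by
    exact stmt9_inv_sqrt hA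
  have hSRone : S * R = 1 := by rw [hSR, nonsing_inv_mul R hRdet]
  have hRSone : R * S = 1 := by rw [hSR, mul_nonsing_inv R hRdet]
  have conjlem : ∀ (M : Matrix (Fin n) (Fin n) ℂ) (x : Fin n → ℂ),
      star (R *ᵥ x) ⬝ᵥ (M *ᵥ (R *ᵥ x)) = star x ⬝ᵥ ((R * M * R) *ᵥ x) := by
    intro M x
    rw [star_mulVec, hRH, mulVec_mulVec, dotProduct_mulVec, vecMul_vecMul,
      dotProduct_mulVec, Matrix.mul_assoc]
  -- quadratic form bound via the operator norm
  have keyT : ∀ y : Fin n → ℂ,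
      ‖star y ⬝ᵥ (T *ᵥ y)‖ ≤ (1 / 2) * (star y ⬝ᵥ y).re := by
    intro y
    set v : EuclideanSpace ℂ (Fin n) := (WithLp.equiv 2 _).symm y with hv
    have h1 : star y ⬝ᵥ (T *ᵥ y) = inner ℂ v (Matrix.toEuclideanCLM (𝕜 := ℂ) T v) := by
      rw [hv, WithLp.equiv_symm_apply, Matrix.toEuclideanCLM_toLp, EuclideanSpace.inner_toLp_toLp,
        dotProduct_comm]
    have h2 : (star y ⬝ᵥ y : ℂ) = (‖v‖ : ℂ) ^ 2 := by
      rw [(by rw [hv, WithLp.equiv_symm_apply, EuclideanSpace.inner_toLp_toLp, dotProduct_comm] :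
        star y ⬝ᵥ y = inner ℂ v v), inner_self_eq_norm_sq_to_K]; norm_cast
    rw [h1, h2]
    calc ‖inner ℂ v (Matrix.toEuclideanCLM (𝕜 := ℂ) T v)‖
        ≤ ‖v‖ * ‖Matrix.toEuclideanCLM (𝕜 := ℂ) T v‖ := norm_inner_le_norm _ _
      _ ≤ ‖v‖ * (‖Matrix.toEuclideanCLM (𝕜 := ℂ) T‖ * ‖v‖) := by
          gcongr; exact (Matrix.toEuclideanCLM (𝕜 := ℂ) T).le_opNorm v
      _ ≤ ‖v‖ * ((1/2) * ‖v‖) := by gcongr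
      _ = (1/2) * (((‖v‖:ℂ)^2).re) := by rw [← Complex.ofReal_pow, Complex.ofReal_re]; ring
  -- key estimate : |x* B x| ≤ (1/2) x* A x
  have key : ∀ x : Fin n → ℂ,
      ‖star x ⬝ᵥ (B *ᵥ x)‖ ≤ (1 / 2) * (star x ⬝ᵥ (A *ᵥ x)).re := by
    intro x
    set y := R *ᵥ x with hy
    have hRTR : R * T * R = B := by
      rw [hTdef]
      simp only [Matrix.mul_assoc, hSRone, Matrix.mul_one]
      rw [← Matrix.mul_assoc, hRSone, Matrix.one_mul]
    have hBq : star x ⬝ᵥ (B *ᵥ x) = star y ⬝ᵥ (T *ᵥ y) := by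
      rw [hy, conjlem, hRTR]
    have hAq : star x ⬝ᵥ (A *ᵥ x) = star y ⬝ᵥ y := by
      have := conjlem 1 x
      rw [Matrix.one_mulVec, Matrix.mul_one, hRR] at this
      rw [hy, ← this]
    rw [hBq, hAq]
    exact keyT y
  -- Hermitian quadratic forms are real
  have imzero : ∀ (M : Matrix (Fin n) (Fin n) ℂ), M.IsHermitian →
      ∀ x : Fin n → ℂ, (star x ⬝ᵥ (M *ᵥ x)).im = 0 := by
    intro M hM x
    rw [← Complex.conj_eq_iff_im]
    have h2 : (starRingEnd ℂ) (star x ⬝ᵥ (M *ᵥ x)) = star (star x ⬝ᵥ (M *ᵥ x)) := rfl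
    rw [h2, ← star_dotProduct_star, star_star, star_mulVec, ← dotProduct_mulVec, hM.eq]
  have himA := imzero A hA.1
  have himB := imzero B hB
  -- real-part inequalities
  have hre : ∀ x : Fin n → ℂ, |(star x ⬝ᵥ (B *ᵥ x)).re| ≤ (1/2) * (star x ⬝ᵥ (A *ᵥ x)).re := by
    intro x
    exact le_trans (Complex.abs_re_le_norm _) (key x)
  -- rewrite quadratic forms of the combination matrices
  have expand : ∀ (c : ℂ) (x : Fin n → ℂ),
      star x ⬝ᵥ ((A + B - c • A) *ᵥ x)
        = star x ⬝ᵥ (A *ᵥ x) + star x ⬝ᵥ (B *ᵥ x) - c * (star x ⬝ᵥ (A *ᵥ x)) := by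
    intro c x
    rw [Matrix.sub_mulVec, Matrix.add_mulVec, Matrix.smul_mulVec,
      dotProduct_sub, dotProduct_add, dotProduct_smul, smul_eq_mul]
  have hqa : ∀ x : Fin n → ℂ, (star x ⬝ᵥ (A *ᵥ x)) = ((star x ⬝ᵥ (A *ᵥ x)).re : ℂ) :=
    fun x => Complex.ext rfl (by simp [himA x])
  have hqb : ∀ x : Fin n → ℂ, (star x ⬝ᵥ (B *ᵥ x)) = ((star x ⬝ᵥ (B *ᵥ x)).re : ℂ) :=
    fun x => Complex.ext rfl (by simp [himB x])
  refine ⟨posDef_iff_dotProduct_mulVec.2 ⟨hA.1.add hB, ?_⟩, posSemidef_iff_dotProduct_mulVec.2 ?_,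
    posSemidef_iff_dotProduct_mulVec.2 ?_⟩
  · intro x hx
    have ha := hA.re_dotProduct_pos (x := x) hx
    have hb := hre x
    rw [Matrix.add_mulVec, dotProduct_add, hqa x, hqb x]
    rw [← Complex.ofReal_add, Complex.zero_lt_real]
    simp only [RCLike.re_to_complex] at ha
    cases abs_le.mp hb with
    | intro h1 h2 => linarith
  · constructor
    · show _ = _
      rw [Matrix.conjTranspose_sub, Matrix.conjTranspose_add, Matrix.conjTranspose_smul,
        hA.1.eq, hB.eq]
      norm_num
    · intro x
      have hb := hre x
      have hq := expand (1/2 : ℂ) x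
      have : (A + B) - (1/2 : ℂ) • A = A + B - (1/2 : ℂ) • A := rfl
      rw [this, hq, hqa x, hqb x]
      set a := (star x ⬝ᵥ (A *ᵥ x)).re
      set b := (star x ⬝ᵥ (B *ᵥ x)).re
      have : (a : ℂ) + (b : ℂ) - (1/2 : ℂ) * (a : ℂ) = ((a + b - (1/2) * a : ℝ) : ℂ) := by
        push_cast; ring
      rw [this, Complex.zero_le_real]
      cases abs_le.mp hb with
      | intro h1 h2 => linarith
  · constructor
    · show _ = _
      rw [Matrix.conjTranspose_sub, Matrix.conjTranspose_add, Matrix.conjTranspose_smul,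
        hA.1.eq, hB.eq]
      norm_num
    · intro x
      have hb := hre x
      have hq : star x ⬝ᵥ (((3/2 : ℂ) • A - (A + B)) *ᵥ x)
          = (3/2 : ℂ) * (star x ⬝ᵥ (A *ᵥ x)) - (star x ⬝ᵥ (A *ᵥ x) + star x ⬝ᵥ (B *ᵥ x)) := by
        rw [Matrix.sub_mulVec, Matrix.add_mulVec, Matrix.smul_mulVec,
          dotProduct_sub, dotProduct_add, dotProduct_smul, smul_eq_mul]
      rw [hq, hqa x, hqb x]
      set a := (star x ⬝ᵥ (A *ᵥ x)).re
      set b := (star x ⬝ᵥ (B *ᵥ x)).re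
      have : (3/2 : ℂ) * (a : ℂ) - ((a : ℂ) + (b : ℂ)) = (((3/2) * a - (a + b) : ℝ) : ℂ) := by
        push_cast; ring
      rw [this, Complex.zero_le_real]
      cases abs_le.mp hb with
      | intro h1 h2 => linarith
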